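/- For n ≥ 4, the polynomial P(x) = (x+1)^{n-2} + 2x^{n-1} + x^n, which is the open set polynomial of the topology τ = P(X_{n-2}) ∪ { X_{n-2} ∪ {x_{n-1}}, X_{n-2} ∪ {x_n}, X_n } on an n-element set, is not unimodal, even though |τ| = 2^{n-2} + 3. -/

import Mathlib

open Polynomial

def openCount {n : ℕ} (τ : Finset (Finset (Fin n))) (j : ℕ) : ℕ :=
  (τ.filter fun s => s.card = j).card

noncomputable def openPoly {n : ℕ} (τ : Finset (Finset (Fin n))) : Polynomial ℝ :=
  ∑ j ∈ Finset.range (n + 1), Polynomial.C (openCount τ j : ℝ) * Polynomial.X ^ j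

/-- A finite sequence `a 0, …, a n` is unimodal: weakly increases then weakly decreases. -/
def UnimodalOn (a : ℕ → ℝ) (n : ℕ) : Prop :=
  ∃ k ≤ n, (∀ i < k, a i ≤ a (i + 1)) ∧ ∀ i, k ≤ i → i < n → a (i + 1) ≤ a i

/-- For `n ≥ 4`, the topology `P(X_{n-2}) ∪ {X_{n-2}∪{x_{n-1}}, X_{n-2}∪{x_n}, X_n}` has
`2^{n-2}+3` open sets, open set polynomial `(x+1)^{n-2} + 2x^{n-1} + x^n`, and this
polynomial is not unimodal. -/
theorem large_topology_not_unimodal {n : ℕ} (hn : 4 ≤ n) :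
    let small : Finset (Fin n) := Finset.univ.filter fun i => (i : ℕ) < n - 2
    let a : Fin n := ⟨n - 2, by omega⟩
    let b : Fin n := ⟨n - 1, by omega⟩
    let τ : Finset (Finset (Fin n)) :=
      small.powerset ∪ {insert a small, insert b small, Finset.univ}
    τ.card = 2 ^ (n - 2) + 3 ∧
    openPoly τ = (Polynomial.X + 1) ^ (n - 2) + 2 * Polynomial.X ^ (n - 1) +
      Polynomial.X ^ n ∧
    ¬ UnimodalOn (fun j => ((Polynomial.X + 1) ^ (n - 2) + 2 * Polynomial.X ^ (n - 1) +
      Polynomial.X ^ n : Polynomial ℝ).coeff j) n := by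
  intro small a b τ
  obtain ⟨m, rfl⟩ : ∃ m, n = m + 2 := ⟨n - 2, by omega⟩
  have hm : 2 ≤ m := by omega
  have hsm : small = Finset.Iio a := by
    ext i; simp only [small, a, Finset.mem_filter, Finset.mem_univ, true_and,
      Finset.mem_Iio, Fin.lt_def]
  have hsc : small.card = m := by rw [hsm, Fin.card_Iio]; rfl
  have haS : a ∉ small := by simp [small, a]
  have hbS : b ∉ small := by simp [small, b]
  have hAc : (insert a small).card = m + 1 := by
    rw [Finset.card_insert_of_notMem haS, hsc]
  have hBc : (insert b small).card = m + 1 := by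
    rw [Finset.card_insert_of_notMem hbS, hsc]
  have hUc : (Finset.univ : Finset (Fin (m + 2))).card = m + 2 := by simp
  have hApow : insert a small ∉ small.powerset := fun h =>
    haS (Finset.mem_powerset.1 h (Finset.mem_insert_self a small))
  have hBpow : insert b small ∉ small.powerset := fun h =>
    hbS (Finset.mem_powerset.1 h (Finset.mem_insert_self b small))
  have hUpow : (Finset.univ : Finset (Fin (m + 2))) ∉ small.powerset := fun h =>
    hbS (Finset.mem_powerset.1 h (Finset.mem_univ b))
  have hab : a ≠ b := by simp [a, b, Fin.ext_iff]
  have hAB : insert a small ≠ insert b small := by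
    intro h
    have : a ∈ insert b small := h ▸ Finset.mem_insert_self a small
    rcases Finset.mem_insert.1 this with h' | h'
    · exact hab h'
    · exact haS h'
  have hAU : insert a small ≠ (Finset.univ : Finset (Fin (m + 2))) := by
    intro h
    apply_fun Finset.card at h
    rw [hAc, hUc] at h; omega
  have hBU : insert b small ≠ (Finset.univ : Finset (Fin (m + 2))) := by
    intro h
    apply_fun Finset.card at h
    rw [hBc, hUc] at h; omega
  have hdisj : Disjoint small.powerset
      ({insert a small, insert b small, Finset.univ} : Finset (Finset (Fin (m + 2)))) := by
    rw [Finset.disjoint_right]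
    intro s hs
    simp only [Finset.mem_insert, Finset.mem_singleton] at hs
    rcases hs with rfl | rfl | rfl
    · exact hApow
    · exact hBpow
    · exact hUpow
  have hext : ({insert a small, insert b small, Finset.univ} :
      Finset (Finset (Fin (m + 2)))).card = 3 := by
    rw [Finset.card_insert_of_notMem (by simp [hAB, hAU]),
      Finset.card_insert_of_notMem (by simp [hBU]), Finset.card_singleton]
  have hcard : τ.card = 2 ^ (m + 2 - 2) + 3 := by
    rw [Finset.card_union_of_disjoint hdisj, Finset.card_powerset, hsc, hext]
    rfl
  -- openCount computations
  have hfilt : ∀ j, (τ.filter fun s => s.card = j) =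
      (small.powerset.filter fun s => s.card = j) ∪
      (({insert a small, insert b small, Finset.univ} :
        Finset (Finset (Fin (m + 2)))).filter fun s => s.card = j) :=
    fun j => Finset.filter_union _ _ _
  have hcount : ∀ j, openCount τ j =
      (small.powerset.filter fun s => s.card = j).card +
      (({insert a small, insert b small, Finset.univ} :
        Finset (Finset (Fin (m + 2)))).filter fun s => s.card = j).card := by
    intro j
    rw [openCount, hfilt j,
      Finset.card_union_of_disjoint
        (hdisj.mono (Finset.filter_subset _ _) (Finset.filter_subset _ _))]
  have hpowfilt : ∀ j, (small.powerset.filter fun s => s.card = j) =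
      small.powersetCard j := fun j => Finset.powersetCard_eq_filter.symm
  have hc1 : ∀ j ≤ m, openCount τ j = m.choose j := by
    intro j hj
    rw [hcount, hpowfilt, Finset.card_powersetCard, hsc]
    have : (({insert a small, insert b small, Finset.univ} :
        Finset (Finset (Fin (m + 2)))).filter fun s => s.card = j) = ∅ := by
      rw [Finset.filter_eq_empty_iff]
      intro s hs
      simp only [Finset.mem_insert, Finset.mem_singleton] at hs
      rcases hs with rfl | rfl | rfl <;> [rw [hAc]; rw [hBc]; rw [hUc]] <;> omega
    rw [this, Finset.card_empty, Nat.add_zero]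
  have hc2 : openCount τ (m + 1) = 2 := by
    rw [hcount]
    have h1 : (small.powerset.filter fun s => s.card = m + 1) = ∅ := by
      rw [Finset.filter_eq_empty_iff]
      intro s hs
      have := Finset.card_le_card (Finset.mem_powerset.1 hs)
      rw [hsc] at this; omega
    have h2 : (({insert a small, insert b small, Finset.univ} :
        Finset (Finset (Fin (m + 2)))).filter fun s => s.card = m + 1) =
        {insert a small, insert b small} := by
      rw [Finset.filter_insert, Finset.filter_insert, Finset.filter_singleton,
        if_pos hAc, if_pos hBc, if_neg (by rw [hUc]; omega)]
      simp
    rw [h1, h2, Finset.card_empty, Finset.card_insert_of_notMem (by simp [hAB]),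
      Finset.card_singleton]
  have hc3 : openCount τ (m + 2) = 1 := by
    rw [hcount]
    have h1 : (small.powerset.filter fun s => s.card = m + 2) = ∅ := by
      rw [Finset.filter_eq_empty_iff]
      intro s hs
      have := Finset.card_le_card (Finset.mem_powerset.1 hs)
      rw [hsc] at this; omega
    have h2 : (({insert a small, insert b small, Finset.univ} :
        Finset (Finset (Fin (m + 2)))).filter fun s => s.card = m + 2) =
        {Finset.univ} := by
      rw [Finset.filter_insert, Finset.filter_insert, Finset.filter_singleton,
        if_neg (by rw [hAc]; omega), if_neg (by rw [hBc]; omega), if_pos hUc]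
    rw [h1, h2, Finset.card_empty, Finset.card_singleton]
  have hpoly : openPoly τ = (Polynomial.X + 1) ^ (m + 2 - 2) +
      2 * Polynomial.X ^ (m + 2 - 1) + Polynomial.X ^ (m + 2) := by
    rw [openPoly, show m + 2 + 1 = (m + 1) + 1 + 1 from rfl, Finset.sum_range_succ,
      Finset.sum_range_succ, hc2, hc3]
    have hsum : ∑ j ∈ Finset.range (m + 1), Polynomial.C ((openCount τ j : ℝ)) *
        Polynomial.X ^ j = (Polynomial.X + 1) ^ m := by
      rw [add_pow]
      refine Finset.sum_congr rfl fun j hj => ?_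
      rw [hc1 j (by simpa using Nat.lt_succ_iff.1 (Finset.mem_range.1 hj))]
      rw [one_pow, mul_one, Polynomial.C_eq_natCast, mul_comm]
    rw [hsum, show ((2 : ℕ) : ℝ) = 2 from by norm_num,
      show ((1 : ℕ) : ℝ) = 1 from by norm_num, map_ofNat, map_one, one_mul]
    rfl
  refine ⟨hcard, hpoly, ?_⟩
  -- coefficient facts
  have em1 : m.choose (m - 1) = m := by
    have h := Nat.choose_symm (show 1 ≤ m by omega)
    rwa [Nat.choose_one_right] at h
  have k1 : ((Polynomial.X + 1) ^ (m + 2 - 2) + 2 * Polynomial.X ^ (m + 2 - 1) +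
      Polynomial.X ^ (m + 2) : Polynomial ℝ).coeff (m - 1) = (m : ℝ) := by
    simp [show m + 2 - 2 = m from rfl, show m + 2 - 1 = m + 1 from rfl,
      Polynomial.coeff_X_add_one_pow, Polynomial.coeff_X_pow, em1,
      (show ¬ m + 1 = m - 1 by omega), (show ¬ m + 2 = m - 1 by omega),
      (show ¬ m - 1 = m + 1 by omega), (show ¬ m - 1 = m + 2 by omega)]
  have k2 : ((Polynomial.X + 1) ^ (m + 2 - 2) + 2 * Polynomial.X ^ (m + 2 - 1) +
      Polynomial.X ^ (m + 2) : Polynomial ℝ).coeff m = 1 := by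
    simp [show m + 2 - 2 = m from rfl, show m + 2 - 1 = m + 1 from rfl,
      Polynomial.coeff_X_add_one_pow, Polynomial.coeff_X_pow, Nat.choose_self,
      (show ¬ m + 1 = m by omega), (show ¬ m + 2 = m by omega),
      (show ¬ m = m + 1 by omega), (show ¬ m = m + 2 by omega)]
  have k3 : ((Polynomial.X + 1) ^ (m + 2 - 2) + 2 * Polynomial.X ^ (m + 2 - 1) +
      Polynomial.X ^ (m + 2) : Polynomial ℝ).coeff (m + 1) = 2 := by
    simp [show m + 2 - 2 = m from rfl, show m + 2 - 1 = m + 1 from rfl,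
      Polynomial.coeff_X_add_one_pow, Polynomial.coeff_X_pow,
      Nat.choose_eq_zero_of_lt (show m < m + 1 by omega),
      (show ¬ m + 2 = m + 1 by omega), (show ¬ m + 1 = m + 2 by omega)]
  have k4 : ((Polynomial.X + 1) ^ (m + 2 - 2) + 2 * Polynomial.X ^ (m + 2 - 1) +
      Polynomial.X ^ (m + 2) : Polynomial ℝ).coeff (m + 2) = 1 := by
    simp [show m + 2 - 2 = m from rfl, show m + 2 - 1 = m + 1 from rfl,
      Polynomial.coeff_X_add_one_pow, Polynomial.coeff_X_pow,
      Nat.choose_eq_zero_of_lt (show m < m + 2 by omega),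
      (show ¬ m + 1 = m + 2 by omega), (show ¬ m + 2 = m + 1 by omega)]
  rintro ⟨k, hk, hinc, hdec⟩
  by_cases hkm : k ≤ m
  · have h := hdec m hkm (by omega)
    simp only [k2, k3] at h
    norm_num at h
  · have h := hinc (m - 1) (by omega)
    rw [show m - 1 + 1 = m from by omega] at h
    simp only [k1, k2] at h
    have h2 : (2 : ℝ) ≤ (m : ℝ) := by exact_mod_cast hm
    linarith
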